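/- Let K be a division ring finite-dimensional over its center, and L/K a division ring extension with Z(K) ⊆ Z(L) such that K is existentially closed in L (every existential sentence in the language of K-rings true in L is true in K). Then L/K is a regular extension: every element of L algebraic over K lies in K. -/

import Mathlib

/-- Terms of the language of `K`-rings in `n` variables: noncommutative polynomial
expressions built from constants from `K`, variables, addition, multiplication and
negation. -/
inductive KTerm (K : Type*) (n : ℕ) : Type _
  | const : K → KTerm K n
  | var : Fin n → KTerm K n
  | add : KTerm K n → KTerm K n → KTerm K n
  | mul : KTerm K n → KTerm K n → KTerm K n
  | neg : KTerm K n → KTerm K n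

/-- Evaluation of a term of the language of `K`-rings in a `K`-ring `R` (given by
`ι : K →+* R`) at a tuple of values for the variables. -/
def KTerm.eval {K R : Type*} [NonAssocSemiring K] [Ring R] {n : ℕ} (ι : K →+* R) :
    KTerm K n → (Fin n → R) → R
  | const a, _ => ι a
  | var i, y => y i
  | add s t, y => KTerm.eval ι s y + KTerm.eval ι t y
  | mul s t, y => KTerm.eval ι s y * KTerm.eval ι t y
  | neg t, y => -KTerm.eval ι t y

/-- `x` is algebraic over the subset `k` of the division ring `L`. -/
def IsAlgebraicOverSet {L : Type*} [DivisionRing L] (k : Set L) (x : L) : Prop :=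
  ∃ (N : ℕ) (b : Fin N → L),
    (∀ y ∈ Subfield.closure (insert x k), ∃ c : Fin N → L,
      (∀ i, c i ∈ k) ∧ y = ∑ i, c i * b i) ∧
    (∀ y ∈ Subfield.closure (insert x k), ∃ c : Fin N → L,
      (∀ i, c i ∈ k) ∧ y = ∑ i, b i * c i)

set_option maxHeartbeats 1000000
set_option synthInstance.maxHeartbeats 2000000

section Density

variable {k L : Type*} [Field k] [DivisionRing L] [Algebra k L]

/-- The endomorphism `v ↦ b * v * f` of a submodule `W` of `L` closed under multiplication. -/
def mulLR (hc : ∀ (c : k) (v : L), algebraMap k L c * v = v * algebraMap k L c)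
    (W : Submodule k L) (hWmul : ∀ v w : L, v ∈ W → w ∈ W → v * w ∈ W)
    (b f : L) (hb : b ∈ W) (hf : f ∈ W) : Module.End k ↥W where
  toFun v := ⟨b * v.val * f, hWmul _ _ (hWmul _ _ hb v.2) hf⟩
  map_add' v w := Subtype.ext (by simp [mul_add, add_mul])
  map_smul' c v := Subtype.ext (by
    simp only [SetLike.val_smul, RingHom.id_apply]
    rw [Algebra.smul_def, Algebra.smul_def, ← mul_assoc, ← hc c b, mul_assoc, mul_assoc, mul_assoc])

@[simp] lemma mulLR_apply (hc : ∀ (c : k) (v : L), algebraMap k L c * v = v * algebraMap k L c)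
    (W : Submodule k L) (hWmul : ∀ v w : L, v ∈ W → w ∈ W → v * w ∈ W)
    (b f : L) (hb : b ∈ W) (hf : f ∈ W) (v : ↥W) :
    (mulLR hc W hWmul b f hb hf v : L) = b * v.val * f := rfl

private lemma rearrange {k L : Type*} [Field k] [DivisionRing L] [Algebra k L]
    (hc : ∀ (c : k) (v : L), algebraMap k L c * v = v * algebraMap k L c)
    (β δ : k) (u1 u2 w : L) :
    algebraMap k L β * u1 * w * (algebraMap k L δ * u2)
      = algebraMap k L (β * δ) * (u1 * w * u2) := by
  have h1 := hc δ u2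
  have h2 := hc δ (u1 * w * u2)
  calc algebraMap k L β * u1 * w * (algebraMap k L δ * u2)
      = algebraMap k L β * (u1 * w * (algebraMap k L δ * u2)) := by
        rw [mul_assoc, mul_assoc, mul_assoc]
    _ = algebraMap k L β * (u1 * w * (u2 * algebraMap k L δ)) := by rw [h1]
    _ = algebraMap k L β * (u1 * w * u2 * algebraMap k L δ) := by
        rw [mul_assoc (u1 * w) u2 _]
    _ = algebraMap k L β * (algebraMap k L δ * (u1 * w * u2)) := by rw [← h2]
    _ = algebraMap k L (β * δ) * (u1 * w * u2) := by
        rw [map_mul, mul_assoc (algebraMap k L β) (algebraMap k L δ) (u1 * w * u2)]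

theorem density_aux
    (hc : ∀ (c : k) (v : L), algebraMap k L c * v = v * algebraMap k L c)
    (W VB : Submodule k L)
    (hle : VB ≤ W) (h1 : (1 : L) ∈ VB)
    (hWmul : ∀ v w : L, v ∈ W → w ∈ W → v * w ∈ W)
    (hWinv : ∀ v : L, v ∈ W → v⁻¹ ∈ W)
    (hVBmul : ∀ v w : L, v ∈ VB → w ∈ VB → v * w ∈ VB)
    (hfdW : FiniteDimensional k ↥W)
    (hT : ∀ t : L, t ∈ W → (∀ b ∈ VB, t * b = b * t) → ∃ c : k, t = algebraMap k L c) :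
    VB = W := by
  classical
  have hW1 : ((⟨1, hle h1⟩ : ↥W)) ≠ 0 := fun h => one_ne_zero (congrArg Subtype.val h)
  haveI : Nontrivial ↥W := ⟨_, _, hW1⟩
  set A := Module.End k ↥W with hA
  set S : Set A := {a : A | ∃ (b f : L) (hb : b ∈ VB) (hf : f ∈ W),
    a = mulLR hc W hWmul b f (hle hb) hf} with hS
  set R : Subalgebra k A := Algebra.adjoin k S with hR
  letI instRingR : Ring ↥R := @Subalgebra.toRing k A _ _ _ R
  letI instModRW : Module ↥R ↥W := inferInstance
  letI instModRPi : ∀ m : ℕ, Module ↥R (Fin m → ↥W) := fun _ => inferInstance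
  -- W is a simple R-module
  have hsmulR : ∀ (r : ↥R) (w : ↥W), (r • w : ↥W) = r.val w := fun _ _ => rfl
  have hsimple : IsSimpleModule ↥R ↥W := by
    have : Nontrivial (Submodule ↥R ↥W) := by
      refine ⟨⊥, ⊤, fun h => hW1 ?_⟩
      have : (⟨1, hle h1⟩ : ↥W) ∈ (⊥ : Submodule ↥R ↥W) := by rw [h]; trivial
      exact (Submodule.mem_bot _).1 this
      
    refine { toIsSimpleOrder := ⟨fun U => ?_⟩ }
    rcases eq_or_ne U ⊥ with h | h
    · exact Or.inl h
    · refine Or.inr (eq_top_iff.2 fun w _ => ?_)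
      obtain ⟨u, huU, hu0⟩ := Submodule.exists_mem_ne_zero_of_ne_bot h
      have hu0' : (u : L) ≠ 0 := fun h' => hu0 (Subtype.ext h')
      have hfmem : (u : L)⁻¹ * (w : L) ∈ W := hWmul _ _ (hWinv _ u.2) w.2
      have hφS : mulLR hc W hWmul 1 ((u : L)⁻¹ * w) (hle h1) hfmem ∈ S :=
        ⟨1, _, h1, hfmem, rfl⟩
      have : (⟨_, Algebra.subset_adjoin hφS⟩ : ↥R) • u = w := by
        rw [hsmulR]
        apply Subtype.ext
        rw [mulLR_apply, one_mul, ← mul_assoc, mul_inv_cancel₀ hu0', one_mul]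
      exact this ▸ U.smul_mem _ huU
  set N := Module.finrank k ↥W with hN
  set bas : Module.Basis (Fin N) k ↥W := Module.finBasis k ↥W with hbas
  -- Fin N → ↥W is a semisimple R-module
  haveI hss : IsSemisimpleModule ↥R (Fin N → ↥W) := by
    apply IsSemisimpleModule.of_sSup_simples_eq_top
    rw [eq_top_iff]
    intro w _
    have hw : w = ∑ j, (LinearMap.single ↥R (fun _ => ↥W) j) (w j) := by
      funext i
      rw [Finset.sum_apply]
      simp [LinearMap.single_apply, Pi.single_apply]
    rw [hw]
    refine Submodule.sum_mem _ fun j _ => ?_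
    have hinj : Function.Injective (LinearMap.single ↥R (fun _ => ↥W) j) := by
      intro a b h
      have := congrFun (congrArg (fun z => (z : Fin N → ↥W)) h) j
      simpa using this
    have hrange : IsSimpleModule ↥R ↥(LinearMap.range (LinearMap.single ↥R (fun _ => ↥W) j)) := by
      haveI := hsimple
      exact IsSimpleModule.congr (LinearEquiv.ofInjective _ hinj).symm
    have hmem : LinearMap.range (LinearMap.single ↥R (fun _ => ↥W) j) ≤
        sSup {m : Submodule ↥R (Fin N → ↥W) | IsSimpleModule ↥R ↥m} :=
      le_sSup hrange
    exact hmem ⟨w j, rfl⟩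
  set v : Fin N → ↥W := ⇑bas with hv
  set U : Submodule ↥R (Fin N → ↥W) := Submodule.span ↥R {v} with hU
  obtain ⟨U', hcompl⟩ := exists_isCompl U
  set π : (Fin N → ↥W) →ₗ[↥R] (Fin N → ↥W) :=
    U.subtype.comp (Submodule.linearProjOfIsCompl U U' hcompl) with hπ
  have hπleft : ∀ w ∈ U, π w = w := fun w hw => by
    rw [hπ, LinearMap.comp_apply]
    exact congrArg Subtype.val (Submodule.linearProjOfIsCompl_apply_left hcompl ⟨w, hw⟩)
  have hπmem : ∀ w, π w ∈ U := fun w => (Submodule.linearProjOfIsCompl U U' hcompl w).2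
  -- every R-endomorphism of W is scalar
  have hEnd : ∀ g : ↥W →ₗ[↥R] ↥W, ∃ c : k, ∀ w : ↥W, (g w : L) = algebraMap k L c * w := by
    intro g
    set t : L := (g ⟨1, hle h1⟩ : L) with htdef
    have htW : t ∈ W := (g ⟨1, hle h1⟩).2
    have hgf : ∀ (f : L) (hf : f ∈ W), (g ⟨f, hf⟩ : L) = t * f := by
      intro f hf
      have hφS : mulLR hc W hWmul 1 f (hle h1) hf ∈ S := ⟨1, f, h1, hf, rfl⟩
      set r : ↥R := ⟨_, Algebra.subset_adjoin hφS⟩ with hr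
      have h1' : r • (⟨1, hle h1⟩ : ↥W) = ⟨f, hf⟩ := by
        rw [hsmulR]; exact Subtype.ext (by rw [mulLR_apply, one_mul, one_mul])
      have := g.map_smul r ⟨1, hle h1⟩
      rw [h1'] at this
      rw [this, hsmulR, mulLR_apply, one_mul]
    have hgb : ∀ b ∈ VB, t * b = b * t := by
      intro b hb
      have h1' : (g ⟨b, hle hb⟩ : L) = t * b := hgf b (hle hb)
      have hφS : mulLR hc W hWmul b 1 (hle hb) (hle h1) ∈ S := ⟨b, 1, hb, hle h1, rfl⟩
      set r : ↥R := ⟨_, Algebra.subset_adjoin hφS⟩ with hr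
      have h2' : r • (⟨1, hle h1⟩ : ↥W) = ⟨b, hle hb⟩ := by
        rw [hsmulR]; exact Subtype.ext (by rw [mulLR_apply, mul_one, mul_one])
      have := g.map_smul r ⟨1, hle h1⟩
      rw [h2'] at this
      rw [this, hsmulR, mulLR_apply, mul_one] at h1'
      exact h1'.symm
    obtain ⟨c, hc'⟩ := hT t htW hgb
    refine ⟨c, fun w => ?_⟩
    have := hgf w.val w.2
    rw [Subtype.coe_eta] at this
    rw [this, hc']
  -- matrix coefficients of π
  have hψ : ∀ i j : Fin N, ∃ c : k, ∀ w : ↥W,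
      ((π (LinearMap.single ↥R (fun _ => ↥W) j w)) i : L) = algebraMap k L c * w := by
    intro i j
    obtain ⟨c, hc'⟩ := hEnd ((LinearMap.proj i).comp (π.comp (LinearMap.single ↥R (fun _ => ↥W) j)))
    exact ⟨c, fun w => hc' w⟩
  choose cm hcm using hψ
  have hπform : ∀ (w : Fin N → ↥W) (i : Fin N),
      ((π w) i : L) = ∑ j, algebraMap k L (cm i j) * (w j : L) := by
    intro w i
    have hw : w = ∑ j, (LinearMap.single ↥R (fun _ => ↥W) j) (w j) := by
      funext i'
      rw [Finset.sum_apply]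
      simp [LinearMap.single_apply, Pi.single_apply]
    conv_lhs => rw [hw]
    rw [map_sum, Finset.sum_apply]
    push_cast
    exact Finset.sum_congr rfl fun j _ => hcm i j (w j)
  -- v_i in terms of the matrix coefficients
  have hvU : v ∈ U := Submodule.mem_span_singleton_self v
  have hπv : π v = v := hπleft v hvU
  have hkey : ∀ i, v i = ∑ j, cm i j • v j := by
    intro i
    apply Subtype.ext
    have h1' := hπform v i
    rw [hπv] at h1'
    rw [h1']
    push_cast
    exact Finset.sum_congr rfl fun j _ => (Algebra.smul_def _ _).symm
  -- density : every k-linear endomorphism of W lies in R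
  have hdense : ∀ φ : A, φ ∈ R := by
    intro φ
    set wφ : Fin N → ↥W := fun i => φ (v i) with hwφ
    have hπwφ : π wφ = wφ := by
      funext i
      apply Subtype.ext
      rw [hπform wφ i]
      have h2' : φ (v i) = ∑ j, cm i j • φ (v j) := by
        conv_lhs => rw [hkey i]
        rw [map_sum]
        exact Finset.sum_congr rfl fun j _ => (map_smul φ _ _)
      show _ = ((φ (v i) : ↥W) : L)
      rw [h2']
      push_cast
      exact Finset.sum_congr rfl fun j _ => (Algebra.smul_def _ _).symm
    have hwU : wφ ∈ U := by rw [← hπwφ]; exact hπmem wφ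
    obtain ⟨r, hr⟩ := Submodule.mem_span_singleton.1 hwU
    have hφr : φ = r.val := by
      apply bas.ext
      intro i
      have h3' := congrFun hr i
      have h4' : (r • v) i = r.val (v i) := rfl
      rw [h4'] at h3'
      exact h3'.symm
    rw [hφr]; exact r.2
  -- R is contained in the k-span of S
  have hSmul : ∀ a ∈ S, ∀ b ∈ S, a * b ∈ S := by
    rintro a ⟨b1, f1, hb1, hf1, rfl⟩ b ⟨b2, f2, hb2, hf2, rfl⟩
    refine ⟨b1 * b2, f2 * f1, hVBmul _ _ hb1 hb2, hWmul _ _ hf2 hf1, ?_⟩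
    apply LinearMap.ext
    intro w
    apply Subtype.ext
    show b1 * ((b2 * w.val * f2)) * f1 = (b1 * b2) * w.val * (f2 * f1)
    noncomm_ring
  have hone : (1 : A) = mulLR hc W hWmul 1 1 (hle h1) (hle h1) := by
    apply LinearMap.ext
    intro w
    apply Subtype.ext
    show w.val = 1 * w.val * 1
    rw [one_mul, mul_one]
  have hspanS : (R : Set A) ⊆ (Submodule.span k S : Set A) := by
    intro a ha
    induction ha using Algebra.adjoin_induction with
    | mem z hz => exact Submodule.subset_span hz
    | algebraMap c =>
        rw [Algebra.algebraMap_eq_smul_one, hone]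
        exact Submodule.smul_mem _ _ (Submodule.subset_span ⟨1, 1, h1, hle h1, rfl⟩)
    | add z w hz hw hz' hw' => exact Submodule.add_mem _ hz' hw'
    | mul z w hz hw hz' hw' =>
        have : z * w ∈ Submodule.span k S * Submodule.span k S := Submodule.mul_mem_mul hz' hw'
        rw [Submodule.span_mul_span] at this
        refine Submodule.span_le.2 ?_ this
        rintro u ⟨u1, hu1, u2, hu2, rfl⟩
        exact Submodule.subset_span (hSmul _ hu1 _ hu2)
  -- bound the span of S by a finite family
  haveI hfdVB : FiniteDimensional k ↥VB := Submodule.finiteDimensional_of_le hle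
  set m := Module.finrank k ↥VB with hm
  set basVB : Module.Basis (Fin m) k ↥VB := Module.finBasis k ↥VB with hbasVB
  set G : Fin m × Fin N → A := fun pq =>
    mulLR hc W hWmul (basVB pq.1 : L) (bas pq.2 : L) (hle (basVB pq.1).2) (bas pq.2).2 with hG
  have hS'' : S ⊆ (Submodule.span k (Set.range G) : Set A) := by
    rintro a ⟨b, f, hb, hf, rfl⟩
    have hbeq : b = ∑ p, algebraMap k L (basVB.repr ⟨b, hb⟩ p) * (basVB p : L) := by
      have := basVB.sum_repr ⟨b, hb⟩
      have hval := congrArg (Subtype.val : ↥VB → L) this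
      push_cast at hval
      exact (((Finset.sum_congr rfl fun p _ => (Algebra.smul_def _ _).symm).trans hval)).symm
    have hfeq : f = ∑ q, algebraMap k L (bas.repr ⟨f, hf⟩ q) * (bas q : L) := by
      have := bas.sum_repr ⟨f, hf⟩
      have hval := congrArg (Subtype.val : ↥W → L) this
      push_cast at hval
      exact (((Finset.sum_congr rfl fun q _ => (Algebra.smul_def _ _).symm).trans hval)).symm
    have haeq : mulLR hc W hWmul b f (hle hb) hf =
        ∑ p, ∑ q, (basVB.repr ⟨b, hb⟩ p * bas.repr ⟨f, hf⟩ q) • G (p, q) := by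
      apply LinearMap.ext
      intro w
      apply Subtype.ext
      have hLHS : (mulLR hc W hWmul b f (hle hb) hf w : L) = b * w.val * f := rfl
      rw [hLHS]
      have hRHS : (((∑ p, ∑ q, (basVB.repr ⟨b, hb⟩ p * bas.repr ⟨f, hf⟩ q) • G (p, q)) w : ↥W) : L)
          = ∑ p, ∑ q, algebraMap k L (basVB.repr ⟨b, hb⟩ p * bas.repr ⟨f, hf⟩ q) *
              ((basVB p : L) * w.val * (bas q : L)) := by
        rw [LinearMap.sum_apply, AddSubmonoidClass.coe_finset_sum]
        refine Finset.sum_congr rfl fun p _ => ?_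
        rw [LinearMap.sum_apply, AddSubmonoidClass.coe_finset_sum]
        refine Finset.sum_congr rfl fun q _ => ?_
        rw [LinearMap.smul_apply, SetLike.val_smul, Algebra.smul_def]
        rfl
      rw [hRHS]
      conv_lhs => rw [hbeq, hfeq]
      rw [Finset.sum_mul, Finset.sum_mul]
      refine Finset.sum_congr rfl fun p _ => ?_
      rw [Finset.mul_sum]
      refine Finset.sum_congr rfl fun q _ => ?_
      exact rearrange hc _ _ _ _ _
    rw [haeq]
    refine Submodule.sum_mem _ fun p _ => Submodule.sum_mem _ fun q _ =>
      Submodule.smul_mem _ _ (Submodule.subset_span ⟨(p, q), rfl⟩)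
  -- counting
  haveI : FiniteDimensional k A := Module.Finite.linearMap _ _ _ _
  have htop : Submodule.span k (Set.range G) = ⊤ := by
    rw [eq_top_iff]
    intro φ _
    exact Submodule.span_le.2 hS'' (hspanS (hdense φ))
  have hcard : Module.finrank k A ≤ m * N := by
    classical
    have h1' := finrank_span_le_card (R := k) (Set.range G)
    rw [htop] at h1'
    rw [← finrank_top k A]
    refine h1'.trans ?_
    rw [Set.toFinset_card]
    calc Fintype.card ↥(Set.range G) ≤ Fintype.card (Fin m × Fin N) := Fintype.card_range_le G
      _ = m * N := by simp
  have hNN : Module.finrank k A = N * N := Module.finrank_linearMap k k ↥W ↥W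
  have hN0 : 0 < N := Module.finrank_pos
  have hNm : N ≤ m := Nat.le_of_mul_le_mul_right (by rw [← hNN]; exact hcard.trans (le_of_eq rfl)) hN0
  have hmN : m ≤ N := Submodule.finrank_mono hle
  exact Submodule.eq_of_le_of_finrank_le hle hNm

end Density

section KTermHelpers

variable {K : Type*} [DivisionRing K]

/-- The term `y₀ ^ m`. -/
def kpow (K : Type*) [DivisionRing K] : ℕ → KTerm K 1
  | 0 => .const 1
  | m + 1 => .mul (kpow K m) (.var 0)

@[simp] lemma eval_kpow {R : Type*} [Ring R] (ι : K →+* R) (y : Fin 1 → R) (m : ℕ) :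
    (kpow K m).eval ι y = (y 0) ^ m := by
  induction m with
  | zero => simp [kpow, KTerm.eval]
  | succ m ih => rw [kpow, KTerm.eval, ih, pow_succ]; rfl

/-- Sum of a list of terms. -/
def ksum (K : Type*) [DivisionRing K] (l : List (KTerm K 1)) : KTerm K 1 :=
  l.foldr .add (.const 0)

@[simp] lemma eval_ksum {R : Type*} [Ring R] (ι : K →+* R) (y : Fin 1 → R)
    (l : List (KTerm K 1)) :
    (ksum K l).eval ι y = (l.map (KTerm.eval ι · y)).sum := by
  induction l with
  | nil => simp [ksum, KTerm.eval]
  | cons a l ih => rw [ksum, List.foldr_cons, KTerm.eval, List.map_cons, List.sum_cons, ← ih]; rfl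

/-- The commutator term `y₀ * a - a * y₀`. -/
def kcomm (a : K) : KTerm K 1 := .add (.mul (.var 0) (.const a)) (.neg (.mul (.const a) (.var 0)))

@[simp] lemma eval_kcomm {R : Type*} [Ring R] (ι : K →+* R) (y : Fin 1 → R) (a : K) :
    (kcomm a).eval ι y = y 0 * ι a - ι a * y 0 := by
  simp [kcomm, KTerm.eval, sub_eq_add_neg]

end KTermHelpers


/-- Theorem 2 of the paper.  Let `K` be a division ring finite-dimensional over its
center, and `L/K` (via `ι`) a division ring extension with `Z(K) ⊆ Z(L)` such that `K` is
existentially closed in `L`: every existential sentence of the language of `K`-rings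
(solvability of a finite system of equations and inequations between terms) true in `L`
is true in `K`.  Then `L/K` is regular: every element of `L` algebraic over `K` lies in
`K`. -/
theorem regular_of_existentially_closed
    {K L : Type*} [DivisionRing K] [DivisionRing L] (ι : K →+* L)
    (hfin : ∃ (n : ℕ) (e : Fin n → K), ∀ y : K,
      ∃ c : Fin n → K, (∀ i, c i ∈ Subring.center K) ∧ y = ∑ i, c i * e i)
    (hZ : ∀ a ∈ Subring.center K, ι a ∈ Subring.center L)
    (hec : ∀ (nv : ℕ) (E Ne : List (KTerm K nv)),
      (∃ y : Fin nv → L, (∀ t ∈ E, KTerm.eval ι t y = 0) ∧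
        (∀ t ∈ Ne, KTerm.eval ι t y ≠ 0)) →
      (∃ y : Fin nv → K, (∀ t ∈ E, KTerm.eval (RingHom.id K) t y = 0) ∧
        (∀ t ∈ Ne, KTerm.eval (RingHom.id K) t y ≠ 0))) :
    ∀ x : L, IsAlgebraicOverSet (Set.range ι) x → x ∈ Set.range ι := by
  intro x halg
  obtain ⟨n, e, he⟩ := hfin
  obtain ⟨N₀, bb, hleft, -⟩ := halg
  classical
  set C : Subring K := Subring.center K with hC
  have hcen : ∀ (c : ↥C) (v : L), ι (c : K) * v = v * ι (c : K) := fun c v =>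
    (Subring.mem_center_iff.1 (hZ c.1 c.2) v).symm
  letI : Algebra ↥C L := (ι.comp C.subtype).toAlgebra' (fun c v => hcen c v)
  have hAM : ∀ c : ↥C, algebraMap ↥C L c = ι c.1 := fun _ => rfl
  set F : Subfield L := Subfield.closure (insert x (Set.range ι)) with hF
  have hxF : x ∈ F := Subfield.subset_closure (Set.mem_insert _ _)
  have hιF : ∀ g : K, ι g ∈ F := fun g =>
    Subfield.subset_closure (Set.mem_insert_iff.2 (Or.inr ⟨g, rfl⟩))
  -- the closure as a subalgebra over the center
  set Wa : Subalgebra ↥C L :=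
    { carrier := F
      mul_mem' := fun ha hb => F.mul_mem ha hb
      one_mem' := F.one_mem
      add_mem' := fun ha hb => F.add_mem ha hb
      zero_mem' := F.zero_mem
      algebraMap_mem' := fun c => hιF c.1 } with hWa
  set W : Submodule ↥C L := Subalgebra.toSubmodule Wa with hW
  have hWmem : ∀ z : L, z ∈ W ↔ z ∈ F := fun z => Iff.rfl
  set VB : Submodule ↥C L :=
    { carrier := Set.range ι
      add_mem' := fun ⟨g, hg⟩ ⟨g', hg'⟩ => ⟨g + g', by rw [map_add, hg, hg']⟩
      zero_mem' := ⟨0, map_zero ι⟩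
      smul_mem' := fun c v hv => by
        obtain ⟨g, hg⟩ := hv
        exact ⟨c.1 * g, by rw [map_mul, hg]; rfl⟩ } with hVB
  have hVBmem : ∀ z : L, z ∈ VB ↔ z ∈ Set.range ι := fun z => Iff.rfl
  -- finite dimensionality of W over the center
  have hspan : W ≤ Submodule.span ↥C (Set.range fun pi : Fin n × Fin N₀ => ι (e pi.1) * bb pi.2) := by
    intro y hy
    obtain ⟨c, hcK, hy'⟩ := hleft y ((hWmem y).1 hy)
    choose g hg using hcK
    have hy'' : y = ∑ i, ι (g i) * bb i := by
      rw [hy']; exact Finset.sum_congr rfl fun i _ => by rw [hg i]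
    rw [hy'']
    refine Submodule.sum_mem _ fun i _ => ?_
    obtain ⟨w, hwc, hwg⟩ := he (g i)
    have : ι (g i) * bb i = ∑ p, (⟨w p, hwc p⟩ : ↥C) • (ι (e p) * bb i) := by
      rw [hwg, map_sum, Finset.sum_mul]
      refine Finset.sum_congr rfl fun p _ => ?_
      rw [map_mul]
      show ι (w p) * ι (e p) * bb i = ι (w p) * (ι (e p) * bb i)
      rw [mul_assoc]
    rw [this]
    exact Submodule.sum_mem _ fun p _ =>
      Submodule.smul_mem _ _ (Submodule.subset_span ⟨(p, i), rfl⟩)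
  haveI hfdspan : FiniteDimensional ↥C
      ↥(Submodule.span ↥C (Set.range fun pi : Fin n × Fin N₀ => ι (e pi.1) * bb pi.2)) :=
    FiniteDimensional.span_of_finite _ (Set.finite_range _)
  haveI hfdW : FiniteDimensional ↥C ↥W := Submodule.finiteDimensional_of_le hspan
  -- the key centralizer property, via existential closedness
  have hT : ∀ t ∈ W, (∀ b ∈ VB, t * b = b * t) → ∃ c : ↥C, t = algebraMap ↥C L c := by
    intro t htW htcomm
    have htF : t ∈ F := (hWmem t).1 htW
    have hFG : Wa.toSubmodule.FG := (Submodule.fg_top _).1 (Module.finite_def.1 hfdW)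
    have hint : IsIntegral ↥C t := IsIntegral.of_mem_of_fg Wa hFG t htF
    set p := minpoly ↥C t with hpdef
    set d := p.natDegree with hd
    have hps : ∑ i ∈ Finset.range (d + 1), ι (p.coeff i).1 * t ^ i = 0 := by
      have h0 := minpoly.aeval ↥C t
      rw [Polynomial.aeval_def, Polynomial.eval₂_eq_sum_range] at h0
      exact h0
    set Epoly : KTerm K 1 :=
      ksum K (List.ofFn fun i : Fin (d + 1) =>
        KTerm.mul (.const (p.coeff i).1) (kpow K i)) with hEp
    set Elist : List (KTerm K 1) := Epoly :: List.ofFn (fun pp : Fin n => kcomm (e pp)) with hEl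
    have hLside : ∀ tm ∈ Elist, KTerm.eval ι tm (fun _ => t) = 0 := by
      intro tm hm
      rcases List.mem_cons.1 hm with rfl | hm
      · rw [hEp, eval_ksum, List.map_ofFn, Fin.sum_ofFn]
        have heach : ∀ i : Fin (d + 1),
            KTerm.eval ι (KTerm.mul (.const (p.coeff i).1) (kpow K i)) (fun _ => t)
              = ι (p.coeff i).1 * t ^ (i : ℕ) := fun i => by
          rw [KTerm.eval, eval_kpow]; rfl
        calc (∑ i : Fin (d + 1), ((KTerm.eval ι · (fun _ => t)) ∘
                (fun i : Fin (d + 1) => KTerm.mul (.const (p.coeff i).1) (kpow K i))) i)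
            = ∑ i : Fin (d + 1), ι (p.coeff i).1 * t ^ (i : ℕ) :=
              Finset.sum_congr rfl fun i _ => heach i
          _ = ∑ i ∈ Finset.range (d + 1), ι (p.coeff i).1 * t ^ i :=
              Fin.sum_univ_eq_sum_range (fun i => ι (p.coeff i).1 * t ^ i) (d + 1)
          _ = 0 := hps
      · obtain ⟨pp, rfl⟩ := List.mem_ofFn.1 hm
        rw [eval_kcomm]
        exact sub_eq_zero.2 (htcomm (ι (e pp)) ⟨e pp, rfl⟩)
    obtain ⟨a, haE, -⟩ := hec 1 Elist [] ⟨fun _ => t, hLside, by intro tm hm; simp at hm⟩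
    set a0 := a 0 with ha0def
    have hpolyK : ∑ i ∈ Finset.range (d + 1), (p.coeff i).1 * a0 ^ i = 0 := by
      have h0 := haE Epoly List.mem_cons_self
      rw [hEp, eval_ksum, List.map_ofFn, Fin.sum_ofFn] at h0
      have heach : ∀ i : Fin (d + 1),
          ((KTerm.eval (RingHom.id K) · a) ∘
            (fun i : Fin (d + 1) => KTerm.mul (.const (p.coeff i).1) (kpow K i))) i
            = (p.coeff i).1 * a0 ^ (i : ℕ) := fun i => by
        show KTerm.eval (RingHom.id K) (KTerm.mul (.const (p.coeff i).1) (kpow K i)) a = _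
        rw [KTerm.eval, eval_kpow]; rfl
      rw [Finset.sum_congr rfl fun i _ => heach i] at h0
      rw [← Fin.sum_univ_eq_sum_range (fun i => (p.coeff i).1 * a0 ^ i) (d + 1)]
      exact h0
    have hcommK : ∀ pp : Fin n, a0 * e pp = e pp * a0 := by
      intro pp
      have h0 := haE (kcomm (e pp)) (List.mem_cons.2 (Or.inr (List.mem_ofFn.2 ⟨pp, rfl⟩)))
      rw [eval_kcomm] at h0
      have h1 : a0 * e pp - e pp * a0 = 0 := h0
      exact sub_eq_zero.1 h1
    have ha0C : a0 ∈ C := by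
      refine Subring.mem_center_iff.2 fun g => ?_
      obtain ⟨w, hwc, hwg⟩ := he g
      rw [hwg, Finset.sum_mul, Finset.mul_sum]
      refine Finset.sum_congr rfl fun pp _ => ?_
      calc w pp * e pp * a0 = w pp * (e pp * a0) := mul_assoc _ _ _
        _ = w pp * (a0 * e pp) := by rw [← hcommK pp]
        _ = w pp * a0 * e pp := (mul_assoc _ _ _).symm
        _ = a0 * w pp * e pp := by rw [← Subring.mem_center_iff.1 (hwc pp) a0]
        _ = a0 * (w pp * e pp) := mul_assoc _ _ _
    set r : ↥C := ⟨a0, ha0C⟩ with hrdef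
    have hroot : Polynomial.eval r p = 0 := by
      apply Subtype.val_injective
      show C.subtype (Polynomial.eval r p) = C.subtype 0
      rw [Polynomial.eval_eq_sum_range, map_sum, map_zero]
      have heach : ∀ i ∈ Finset.range (d + 1),
          C.subtype (p.coeff i * r ^ i) = (p.coeff i).1 * a0 ^ i := fun i _ => by
        rw [map_mul, map_pow]; rfl
      rw [Finset.sum_congr rfl heach]
      exact hpolyK
    obtain ⟨q, hq⟩ := Polynomial.dvd_iff_isRoot.2 hroot
    have haeval0 := minpoly.aeval ↥C t
    rw [← hpdef, hq, map_mul] at haeval0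
    have hXr : Polynomial.aeval t (Polynomial.X - Polynomial.C r) = t - ι a0 := by
      rw [map_sub, Polynomial.aeval_X, Polynomial.aeval_C]; rfl
    rw [hXr] at haeval0
    rcases mul_eq_zero.1 haeval0 with h | h
    · exact ⟨r, by rw [hAM r]; exact sub_eq_zero.1 h⟩
    · exfalso
      have hpm : p.Monic := minpoly.monic hint
      have hqm : q.Monic := (Polynomial.monic_X_sub_C r).of_mul_monic_left (by rw [← hq]; exact hpm)
      have hmin := minpoly.min (A := ↥C) (x := t) hqm h
      have hq0 : q ≠ 0 := hqm.ne_zero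
      have hdeg : p.degree = 1 + q.degree := by
        rw [hq, Polynomial.degree_mul, Polynomial.degree_X_sub_C]
      rw [← hpdef, hdeg, Polynomial.degree_eq_natDegree hq0] at hmin
      have hfin' : (1 + q.natDegree : ℕ) ≤ q.natDegree := by exact_mod_cast hmin
      omega
  -- conclusion by the density theorem
  have hfinal : VB = W := by
    refine density_aux hcen W VB ?_ ⟨1, map_one ι⟩ (fun v w hv hw => F.mul_mem hv hw)
      (fun v hv => F.inv_mem hv) ?_ hfdW hT
    · rintro z ⟨g, rfl⟩; exact hιF g
    · rintro v w ⟨g, rfl⟩ ⟨g', rfl⟩; exact ⟨g * g', map_mul ι g g'⟩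
  have : x ∈ VB := hfinal.symm ▸ ((hWmem x).2 hxF)
  exact (hVBmem x).1 this
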